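/- arXiv:2110.07567 — 2 statements merged into one kernel-verified Lean document; each statement's English description precedes it below -/
import Mathlib

section
/- (Descent lemma for preconditioned stochastic gradient with bounded Hessian approximation, nonconvex case) Let f be Λ-smooth and bounded below by f̂. Under the update ω_{t+1} = ω_t - α H_t g_t, where θ₁I ⪯ H_t ⪯ θ₂I, E[g_t|ω_t] = ∇f(ω_t), and E[‖g_t‖²|ω_t] ≤ γ² + η‖∇f(ω_t)‖², with constant step size α ∈ (0, θ₁/(θ₂²ηΛ)), the averaged squared gradient norm satisfies E[(1/T)Σ_{t=0}^{T-1} ‖∇f(ω_t)‖²] ≤ (αθ₂²γ²Λ)/θ₁ + 2(f(ω₀) - f̂)/(αθ₁T). -/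
open RealInnerProductSpace

lemma descent_aux7 {E : Type*} [NormedAddCommGroup E] [InnerProductSpace ℝ E] [CompleteSpace E]
    (f : E → ℝ) (Λ : ℝ) (hΛ : 0 ≤ Λ)
    (hdiff : ∀ x, DifferentiableAt ℝ f x)
    (hlip : ∀ x y : E, ‖gradient f y - gradient f x‖ ≤ Λ * ‖y - x‖)
    (x y : E) :
    f y ≤ f x + ⟪gradient f x, y - x⟫ + Λ / 2 * ‖y - x‖ ^ 2 := by
  set c : ℝ → E := fun s => x + s • (y - x) with hc_def
  have hc : ∀ s : ℝ, HasDerivAt c (y - x) s := by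
    intro s
    have h := ((hasDerivAt_id s).smul_const (y - x)).const_add x
    convert h using 1 <;> simp [hc_def]
  have hφ : ∀ s : ℝ, HasDerivAt (fun s => f (c s)) ⟪gradient f (c s), y - x⟫ s := by
    intro s
    have h1 := (hdiff (c s)).hasGradientAt.hasFDerivAt
    have h2 : HasDerivAt (fun s => f (c s)) _ s := h1.comp_hasDerivAt s (hc s)
    simpa [InnerProductSpace.toDual_apply_apply] using h2
  have hgradlip : LipschitzWith (Real.toNNReal Λ) (gradient f) := by
    apply LipschitzWith.of_dist_le_mul
    intro a b
    simpa [dist_eq_norm, Real.coe_toNNReal Λ hΛ] using hlip b a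
  have hccont : Continuous c := by
    apply continuous_const.add (continuous_id.smul continuous_const)
  have hψcont : Continuous fun s : ℝ => ⟪gradient f (c s), y - x⟫ :=
    (hgradlip.continuous.comp hccont).inner continuous_const
  have key : f y - f x = ∫ s in (0:ℝ)..1, ⟪gradient f (c s), y - x⟫ := by
    have h2 := intervalIntegral.integral_eq_sub_of_hasDerivAt (a := (0:ℝ)) (b := 1)
      (fun s _ => hφ s) (hψcont.intervalIntegrable 0 1)
    simp only [hc_def, one_smul, zero_smul, add_zero, add_sub_cancel] at h2
    rw [h2]
  have pointwise : ∀ s ∈ Set.Icc (0:ℝ) 1,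
      ⟪gradient f (c s), y - x⟫ ≤ ⟪gradient f x, y - x⟫ + Λ * s * ‖y - x‖ ^ 2 := by
    intro s hs
    have h1 : ⟪gradient f (c s) - gradient f x, y - x⟫
        ≤ ‖gradient f (c s) - gradient f x‖ * ‖y - x‖ := real_inner_le_norm _ _
    have h2 : ‖gradient f (c s) - gradient f x‖ ≤ Λ * (s * ‖y - x‖) := by
      have h := hlip x (c s)
      simp only [hc_def, add_sub_cancel_left, norm_smul, Real.norm_eq_abs,
        abs_of_nonneg hs.1] at h
      exact h
    have h3 : ⟪gradient f (c s), y - x⟫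
        = ⟪gradient f x, y - x⟫ + ⟪gradient f (c s) - gradient f x, y - x⟫ := by
      rw [inner_sub_left]; ring
    nlinarith [norm_nonneg (y - x), sq_nonneg ‖y - x‖]
  have intle : (∫ s in (0:ℝ)..1, ⟪gradient f (c s), y - x⟫)
      ≤ ∫ s in (0:ℝ)..1, (⟪gradient f x, y - x⟫ + Λ * s * ‖y - x‖ ^ 2) := by
    apply intervalIntegral.integral_mono_on (by norm_num) (hψcont.intervalIntegrable 0 1)
      (Continuous.intervalIntegrable (by continuity) 0 1) pointwise
  have intval : (∫ s in (0:ℝ)..1, (⟪gradient f x, y - x⟫ + Λ * s * ‖y - x‖ ^ 2))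
      = ⟪gradient f x, y - x⟫ + Λ / 2 * ‖y - x‖ ^ 2 := by
    have he : (fun s : ℝ => ⟪gradient f x, y - x⟫ + Λ * s * ‖y - x‖ ^ 2)
        = fun s : ℝ => ⟪gradient f x, y - x⟫ + (Λ * ‖y - x‖ ^ 2) * s := by
      funext s; ring
    rw [he, intervalIntegral.integral_add (intervalIntegrable_const)
      ((by continuity : Continuous fun s : ℝ => (Λ * ‖y - x‖ ^ 2) * s).intervalIntegrable 0 1),
      intervalIntegral.integral_const_mul, integral_id, intervalIntegral.integral_const]
    simp; ring
  linarith [key, intle, intval.le, intval.ge]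

lemma opnorm_aux7 {E : Type*} [NormedAddCommGroup E] [InnerProductSpace ℝ E] [CompleteSpace E]
    (A : E →L[ℝ] E) (hsa : IsSelfAdjoint A) (θ : ℝ) (hθ : 0 ≤ θ)
    (h0 : ∀ v : E, 0 ≤ ⟪v, A v⟫) (h2 : ∀ v : E, ⟪v, A v⟫ ≤ θ * ‖v‖ ^ 2) (v : E) :
    ‖A v‖ ≤ θ * ‖v‖ := by
  have hsym : ∀ a b : E, ⟪A a, b⟫ = ⟪a, A b⟫ := fun a b => hsa.isSymmetric a b
  have key : ∀ u : E, ⟪u, A v⟫ ≤ θ * (‖u‖ + ‖v‖) ^ 2 / 4 := by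
    intro u
    have hs : ⟪v, A u⟫ = ⟪u, A v⟫ := by rw [real_inner_comm]; exact hsym u v
    have e1 : ⟪u + v, A (u + v)⟫ - ⟪u - v, A (u - v)⟫ = 4 * ⟪u, A v⟫ := by
      simp only [map_add, map_sub, inner_add_left, inner_add_right, inner_sub_left,
        inner_sub_right]
      linarith [hs]
    have b1 : ⟪u + v, A (u + v)⟫ ≤ θ * ‖u + v‖ ^ 2 := h2 _
    have b2 : 0 ≤ ⟪u - v, A (u - v)⟫ := h0 _
    have b3 : ‖u + v‖ ≤ ‖u‖ + ‖v‖ := norm_add_le u v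
    have b4 : ‖u + v‖ ^ 2 ≤ (‖u‖ + ‖v‖) ^ 2 := by nlinarith [norm_nonneg (u + v)]
    nlinarith [mul_le_mul_of_nonneg_left b4 hθ]
  by_cases hAv : A v = 0
  · rw [hAv]; simp; positivity
  · have hAv' : 0 < ‖A v‖ := norm_pos_iff.mpr hAv
    have hv : 0 < ‖v‖ := by
      rcases eq_or_ne v 0 with h | h
      · exfalso; apply hAv; rw [h, map_zero]
      · exact norm_pos_iff.mpr h
    have hk := key ((‖v‖ / ‖A v‖) • A v)
    rw [real_inner_smul_left, real_inner_self_eq_norm_sq, norm_smul, Real.norm_eq_abs,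
      abs_of_nonneg (by positivity : (0:ℝ) ≤ ‖v‖ / ‖A v‖)] at hk
    have hc : ‖v‖ / ‖A v‖ * ‖A v‖ = ‖v‖ := div_mul_cancel₀ _ (ne_of_gt hAv')
    have hc2 : ‖v‖ / ‖A v‖ * ‖A v‖ ^ 2 = ‖v‖ * ‖A v‖ := by
      field_simp
    rw [hc2, hc] at hk
    nlinarith [hk, hv]

/-- Trajectory of the preconditioned stochastic method: `ω_{t+1} = ω_t - α H_t g(ω_t, ξ_t)`,
as a function of the finitely many noise samples drawn so far. -/
noncomputable def traj7 {d : ℕ} {Ω : Type*} (ω0 : EuclideanSpace ℝ (Fin d)) (α : ℝ)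
    (H : ℕ → (EuclideanSpace ℝ (Fin d) →L[ℝ] EuclideanSpace ℝ (Fin d)))
    (g : EuclideanSpace ℝ (Fin d) → Ω → EuclideanSpace ℝ (Fin d)) :
    (t : ℕ) → (Fin t → Ω) → EuclideanSpace ℝ (Fin d)
  | 0, _ => ω0
  | (t + 1), v => traj7 ω0 α H g t (Fin.init v) -
      α • H t (g (traj7 ω0 α H g t (Fin.init v)) (v (Fin.last t)))

set_option maxHeartbeats 1000000 in
/-- Nonconvex convergence of the preconditioned stochastic method: for `f` Λ-smooth and
bounded below by `fhat`, symmetric preconditioners `θ₁ I ⪯ H_t ⪯ θ₂ I`, unbiased stochastic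
gradients with second moment `≤ γ² + η‖∇f‖²`, and step size `α ∈ (0, θ₁/(θ₂²ηΛ))`:
`E[(1/T) ∑_{t<T} ‖∇f(ω_t)‖²] ≤ αθ₂²γ²Λ/θ₁ + 2(f(ω₀) - fhat)/(αθ₁T)`. -/
theorem stmt7 {d : ℕ} {Ω : Type*} [Fintype Ω]
    (p : Ω → ℝ) (hp : ∀ x, 0 ≤ p x) (hp1 : ∑ x, p x = 1)
    (f : EuclideanSpace ℝ (Fin d) → ℝ) (Λ θ₁ θ₂ γ η α fhat : ℝ)
    (hf : ContDiff ℝ 2 f)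
    (hlip : ∀ ω ω' : EuclideanSpace ℝ (Fin d),
      ‖gradient f ω' - gradient f ω‖ ≤ Λ * ‖ω' - ω‖)
    (hbelow : ∀ ω, fhat ≤ f ω)
    (hΛ : 0 < Λ) (hθ1 : 0 < θ₁) (hθ12 : θ₁ ≤ θ₂) (hγ : 0 ≤ γ) (hη : 0 < η)
    (hα0 : 0 < α) (hα1 : α < θ₁ / (θ₂ ^ 2 * η * Λ))
    (H : ℕ → (EuclideanSpace ℝ (Fin d) →L[ℝ] EuclideanSpace ℝ (Fin d)))
    (hHsa : ∀ t, IsSelfAdjoint (H t))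
    (hH : ∀ t v, θ₁ * ‖v‖ ^ 2 ≤ ⟪v, H t v⟫ ∧ ⟪v, H t v⟫ ≤ θ₂ * ‖v‖ ^ 2)
    (g : EuclideanSpace ℝ (Fin d) → Ω → EuclideanSpace ℝ (Fin d))
    (hunb : ∀ ω, ∑ x, p x • g ω x = gradient f ω)
    (hmom : ∀ ω, ∑ x, p x * ‖g ω x‖ ^ 2 ≤ γ ^ 2 + η * ‖gradient f ω‖ ^ 2)
    (ω0 : EuclideanSpace ℝ (Fin d)) (T : ℕ) (hT : 0 < T) :
    (1 / (T : ℝ)) * ∑ t ∈ Finset.range T,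
        (∑ v : Fin t → Ω, (∏ i, p (v i)) * ‖gradient f (traj7 ω0 α H g t v)‖ ^ 2) ≤
      α * θ₂ ^ 2 * γ ^ 2 * Λ / θ₁ + 2 * (f ω0 - fhat) / (α * θ₁ * (T : ℝ)) := by
  have hθ2 : 0 < θ₂ := lt_of_lt_of_le hθ1 hθ12
  have hdiff : ∀ x, DifferentiableAt ℝ f x :=
    fun x => (hf.differentiable (by norm_num)).differentiableAt
  have descent := descent_aux7 f Λ hΛ.le hdiff hlip
  have hHnorm : ∀ t (v : EuclideanSpace ℝ (Fin d)), ‖H t v‖ ≤ θ₂ * ‖v‖ := by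
    intro t v
    refine opnorm_aux7 (H t) (hHsa t) θ₂ hθ2.le (fun u => ?_) (fun u => (hH t u).2) v
    exact le_trans (by positivity) (hH t u).1
  have hαb : α * (θ₂ ^ 2 * η * Λ) ≤ θ₁ := by
    have hpos : 0 < θ₂ ^ 2 * η * Λ := by positivity
    have := (lt_div_iff₀ hpos).mp hα1
    linarith
  -- one-step expected descent at a fixed point
  have step : ∀ (a : EuclideanSpace ℝ (Fin d)) (t : ℕ),
      ∑ x : Ω, p x * f (a - α • H t (g a x)) ≤
        f a - α * θ₁ / 2 * ‖gradient f a‖ ^ 2 + Λ * α ^ 2 * θ₂ ^ 2 * γ ^ 2 / 2 := by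
    intro a t
    have h1 : ∀ x : Ω, f (a - α • H t (g a x)) ≤
        f a + (-α) * ⟪gradient f a, H t (g a x)⟫ + Λ / 2 * (α ^ 2 * ‖H t (g a x)‖ ^ 2) := by
      intro x
      have hd := descent a (a - α • H t (g a x))
      have e : a - α • H t (g a x) - a = -(α • H t (g a x)) := by abel
      rw [e] at hd
      refine hd.trans_eq ?_
      rw [inner_neg_right, real_inner_smul_right, norm_neg, norm_smul, Real.norm_eq_abs,
        mul_pow, sq_abs]
      ring
    have hsum1 : ∑ x : Ω, p x * f (a - α • H t (g a x)) ≤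
        ∑ x : Ω, p x * (f a + (-α) * ⟪gradient f a, H t (g a x)⟫
          + Λ / 2 * (α ^ 2 * ‖H t (g a x)‖ ^ 2)) :=
      Finset.sum_le_sum (fun x _ => mul_le_mul_of_nonneg_left (h1 x) (hp x))
    have hinner : ∑ x : Ω, p x * ⟪gradient f a, H t (g a x)⟫
        = ⟪gradient f a, H t (gradient f a)⟫ := by
      calc ∑ x : Ω, p x * ⟪gradient f a, H t (g a x)⟫
          = ∑ x : Ω, ⟪gradient f a, p x • H t (g a x)⟫ :=
            Finset.sum_congr rfl (fun x _ => (real_inner_smul_right _ _ _).symm)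
        _ = ⟪gradient f a, ∑ x : Ω, p x • H t (g a x)⟫ := (inner_sum _ _ _).symm
        _ = ⟪gradient f a, H t (∑ x : Ω, p x • g a x)⟫ := by
            rw [map_sum]
            simp [map_smul]
        _ = ⟪gradient f a, H t (gradient f a)⟫ := by rw [hunb a]
    have hinner_ge : θ₁ * ‖gradient f a‖ ^ 2 ≤ ⟪gradient f a, H t (gradient f a)⟫ :=
      (hH t (gradient f a)).1
    have hns : ∑ x : Ω, p x * ‖H t (g a x)‖ ^ 2
        ≤ θ₂ ^ 2 * (γ ^ 2 + η * ‖gradient f a‖ ^ 2) := by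
      calc ∑ x : Ω, p x * ‖H t (g a x)‖ ^ 2
          ≤ ∑ x : Ω, p x * (θ₂ ^ 2 * ‖g a x‖ ^ 2) := by
            refine Finset.sum_le_sum (fun x _ => mul_le_mul_of_nonneg_left ?_ (hp x))
            have h := hHnorm t (g a x)
            nlinarith [norm_nonneg (H t (g a x)), norm_nonneg (g a x)]
        _ = θ₂ ^ 2 * ∑ x : Ω, p x * ‖g a x‖ ^ 2 := by
            rw [Finset.mul_sum]; exact Finset.sum_congr rfl (fun x _ => by ring)
        _ ≤ θ₂ ^ 2 * (γ ^ 2 + η * ‖gradient f a‖ ^ 2) :=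
            mul_le_mul_of_nonneg_left (hmom a) (by positivity)
    have hsplit : ∑ x : Ω, p x * (f a + (-α) * ⟪gradient f a, H t (g a x)⟫
          + Λ / 2 * (α ^ 2 * ‖H t (g a x)‖ ^ 2))
        = f a + (-α) * (∑ x : Ω, p x * ⟪gradient f a, H t (g a x)⟫)
          + (Λ * α ^ 2 / 2) * (∑ x : Ω, p x * ‖H t (g a x)‖ ^ 2) := by
      have e0 : ∀ x : Ω, p x * (f a + (-α) * ⟪gradient f a, H t (g a x)⟫
            + Λ / 2 * (α ^ 2 * ‖H t (g a x)‖ ^ 2))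
          = p x * f a + (-α) * (p x * ⟪gradient f a, H t (g a x)⟫)
            + (Λ * α ^ 2 / 2) * (p x * ‖H t (g a x)‖ ^ 2) := fun x => by ring
      rw [Finset.sum_congr rfl (fun x _ => e0 x), Finset.sum_add_distrib,
        Finset.sum_add_distrib, ← Finset.sum_mul, hp1, one_mul, ← Finset.mul_sum,
        ← Finset.mul_sum]
    rw [hsplit] at hsum1
    have c1 : (-α) * (∑ x : Ω, p x * ⟪gradient f a, H t (g a x)⟫)
        ≤ -α * (θ₁ * ‖gradient f a‖ ^ 2) := by
      rw [hinner]
      nlinarith [hinner_ge]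
    have c2 : (Λ * α ^ 2 / 2) * (∑ x : Ω, p x * ‖H t (g a x)‖ ^ 2)
        ≤ (Λ * α ^ 2 / 2) * (θ₂ ^ 2 * (γ ^ 2 + η * ‖gradient f a‖ ^ 2)) :=
      mul_le_mul_of_nonneg_left hns (by positivity)
    have hG2 : 0 ≤ ‖gradient f a‖ ^ 2 := sq_nonneg _
    nlinarith [mul_le_mul_of_nonneg_left hαb (mul_nonneg (mul_nonneg hα0.le hG2) (by norm_num : (0:ℝ) ≤ 1/2))]
  -- sum decomposition over trajectories
  have hsumdec : ∀ (t : ℕ) (φ : (Fin (t+1) → Ω) → ℝ),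
      ∑ v : Fin (t+1) → Ω, φ v = ∑ v : Fin t → Ω, ∑ x : Ω, φ (Fin.snoc v x) := by
    intro t φ
    rw [← Equiv.sum_comp (Fin.snocEquiv (fun _ => Ω)) φ, Fintype.sum_prod_type]
    rw [Finset.sum_comm]
    simp [Fin.snocEquiv]
  have hWsnoc : ∀ (t : ℕ) (v : Fin t → Ω) (x : Ω),
      (∏ i, p ((Fin.snoc v x : Fin (t+1) → Ω) i)) = (∏ i, p (v i)) * p x := by
    intro t v x
    have h : (fun i => p ((Fin.snoc v x : Fin (t+1) → Ω) i))
        = Fin.snoc (fun i => p (v i)) (p x) := Fin.comp_snoc p v x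
    rw [h, Fin.prod_snoc]
  have htrajsnoc : ∀ (t : ℕ) (v : Fin t → Ω) (x : Ω),
      traj7 ω0 α H g (t+1) (Fin.snoc v x)
        = traj7 ω0 α H g t v - α • H t (g (traj7 ω0 α H g t v) x) := by
    intro t v x
    simp only [traj7, Fin.init_snoc, Fin.snoc_last]
  have hW0 : ∀ (t : ℕ) (v : Fin t → Ω), 0 ≤ ∏ i, p (v i) :=
    fun t v => Finset.prod_nonneg (fun i _ => hp (v i))
  have hW1 : ∀ t : ℕ, ∑ v : Fin t → Ω, ∏ i, p (v i) = 1 := by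
    intro t
    induction t with
    | zero => simp
    | succ t ih =>
      rw [hsumdec t (fun v => ∏ i, p (v i))]
      calc ∑ v : Fin t → Ω, ∑ x : Ω, ∏ i, p ((Fin.snoc v x : Fin (t+1) → Ω) i)
          = ∑ v : Fin t → Ω, (∏ i, p (v i)) * ∑ x : Ω, p x := by
            refine Finset.sum_congr rfl (fun v _ => ?_)
            rw [Finset.mul_sum]
            exact Finset.sum_congr rfl (fun x _ => hWsnoc t v x)
        _ = 1 := by rw [hp1]; simpa using ih
  -- expected one-step descent over trajectory distribution
  obtain ⟨Fv, hFv_def⟩ : ∃ F : ℕ → ℝ,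
      F = fun t => ∑ v : Fin t → Ω, (∏ i, p (v i)) * f (traj7 ω0 α H g t v) := ⟨_, rfl⟩
  obtain ⟨Gv, hGv_def⟩ : ∃ G : ℕ → ℝ,
      G = fun t => ∑ v : Fin t → Ω, (∏ i, p (v i)) *
        ‖gradient f (traj7 ω0 α H g t v)‖ ^ 2 := ⟨_, rfl⟩
  rw [show (fun t => ∑ v : Fin t → Ω, (∏ i, p (v i)) *
        ‖gradient f (traj7 ω0 α H g t v)‖ ^ 2) = Gv from hGv_def.symm]
  have key : ∀ t : ℕ, Fv (t+1) ≤ Fv t - α * θ₁ / 2 * Gv t + Λ * α ^ 2 * θ₂ ^ 2 * γ ^ 2 / 2 := by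
    intro t
    simp only [hFv_def, hGv_def]
    have hdec : (∑ v : Fin (t+1) → Ω, (∏ i, p (v i)) * f (traj7 ω0 α H g (t+1) v))
        = ∑ v : Fin t → Ω, (∏ i, p (v i)) *
        (∑ x : Ω, p x * f (traj7 ω0 α H g t v - α • H t (g (traj7 ω0 α H g t v) x))) := by
      rw [hsumdec t (fun v => (∏ i, p (v i)) * f (traj7 ω0 α H g (t+1) v))]
      refine Finset.sum_congr rfl (fun v _ => ?_)
      rw [Finset.mul_sum]
      refine Finset.sum_congr rfl (fun x _ => ?_)
      rw [hWsnoc t v x, htrajsnoc t v x]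
      ring
    rw [hdec]
    have hle : ∑ v : Fin t → Ω, (∏ i, p (v i)) *
        (∑ x : Ω, p x * f (traj7 ω0 α H g t v - α • H t (g (traj7 ω0 α H g t v) x)))
        ≤ ∑ v : Fin t → Ω, (∏ i, p (v i)) *
          (f (traj7 ω0 α H g t v) - α * θ₁ / 2 * ‖gradient f (traj7 ω0 α H g t v)‖ ^ 2
            + Λ * α ^ 2 * θ₂ ^ 2 * γ ^ 2 / 2) :=
      Finset.sum_le_sum (fun v _ =>
        mul_le_mul_of_nonneg_left (step (traj7 ω0 α H g t v) t) (hW0 t v))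
    refine hle.trans_eq ?_
    have expand : ∀ v : Fin t → Ω, (∏ i, p (v i)) *
        (f (traj7 ω0 α H g t v) - α * θ₁ / 2 * ‖gradient f (traj7 ω0 α H g t v)‖ ^ 2
          + Λ * α ^ 2 * θ₂ ^ 2 * γ ^ 2 / 2)
        = (∏ i, p (v i)) * f (traj7 ω0 α H g t v)
          - α * θ₁ / 2 * ((∏ i, p (v i)) * ‖gradient f (traj7 ω0 α H g t v)‖ ^ 2)
          + Λ * α ^ 2 * θ₂ ^ 2 * γ ^ 2 / 2 * (∏ i, p (v i)) := fun v => by ring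
    rw [Finset.sum_congr rfl (fun v _ => expand v), Finset.sum_add_distrib,
      Finset.sum_sub_distrib, ← Finset.mul_sum, ← Finset.mul_sum, hW1 t, mul_one]
  -- telescoping
  have tel : ∀ T' : ℕ, α * θ₁ / 2 * (∑ t ∈ Finset.range T', Gv t)
      ≤ Fv 0 - Fv T' + T' * (Λ * α ^ 2 * θ₂ ^ 2 * γ ^ 2 / 2) := by
    intro T'
    induction T' with
    | zero => simp
    | succ n ih =>
      rw [Finset.sum_range_succ, mul_add]
      have hk := key n
      push_cast
      linarith only [ih, hk]
  have hFv0 : Fv 0 = f ω0 := by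
    rw [hFv_def]
    simp [traj7]
  have hFvT : fhat ≤ Fv T := by
    rw [hFv_def]
    have h : ∑ v : Fin T → Ω, (∏ i, p (v i)) * fhat
        ≤ ∑ v : Fin T → Ω, (∏ i, p (v i)) * f (traj7 ω0 α H g T v) :=
      Finset.sum_le_sum (fun v _ => mul_le_mul_of_nonneg_left (hbelow _) (hW0 T v))
    rwa [← Finset.sum_mul, hW1 T, one_mul] at h
  have hTpos : (0:ℝ) < T := by exact_mod_cast hT
  have hbound : ∑ t ∈ Finset.range T, Gv t
      ≤ 2 / (α * θ₁) * (f ω0 - fhat + T * (Λ * α ^ 2 * θ₂ ^ 2 * γ ^ 2 / 2)) := by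
    have h1 : α * θ₁ / 2 * (∑ t ∈ Finset.range T, Gv t)
        ≤ f ω0 - fhat + T * (Λ * α ^ 2 * θ₂ ^ 2 * γ ^ 2 / 2) := by
      have := tel T
      rw [hFv0] at this
      linarith only [this, hFvT]
    have h2 : 0 < α * θ₁ := by positivity
    calc ∑ t ∈ Finset.range T, Gv t
        = (α * θ₁ / 2 * (∑ t ∈ Finset.range T, Gv t)) * (2 / (α * θ₁)) := by
          field_simp
        _ ≤ (f ω0 - fhat + T * (Λ * α ^ 2 * θ₂ ^ 2 * γ ^ 2 / 2)) * (2 / (α * θ₁)) :=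
          mul_le_mul_of_nonneg_right h1 (by positivity)
        _ = 2 / (α * θ₁) * (f ω0 - fhat + T * (Λ * α ^ 2 * θ₂ ^ 2 * γ ^ 2 / 2)) := by ring
  calc (1 / (T : ℝ)) * ∑ t ∈ Finset.range T, Gv t
      ≤ (1 / (T : ℝ)) * (2 / (α * θ₁) * (f ω0 - fhat + T * (Λ * α ^ 2 * θ₂ ^ 2 * γ ^ 2 / 2))) :=
        mul_le_mul_of_nonneg_left hbound (by positivity)
    _ = α * θ₂ ^ 2 * γ ^ 2 * Λ / θ₁ + 2 * (f ω0 - fhat) / (α * θ₁ * (T : ℝ)) := by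
        field_simp
        ring
end

section
/- (One-step nonconvex descent) Under the assumptions of the nonconvex setting, for step size α ≤ θ₁/(θ₂²ηΛ): E[f(ω_{t+1}) | ω_t] ≤ f(ω_t) - (αθ₁/2)‖∇f(ω_t)‖² + (α²θ₂²Λγ²)/2. -/
open RealInnerProductSpace

lemma descent_lemma {d : ℕ} (f : EuclideanSpace ℝ (Fin d) → ℝ) (Λ : ℝ) (hΛ : 0 ≤ Λ)
    (hf : Differentiable ℝ f)
    (hlip : ∀ ω ω' : EuclideanSpace ℝ (Fin d),
      ‖gradient f ω' - gradient f ω‖ ≤ Λ * ‖ω' - ω‖)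
    (ω v : EuclideanSpace ℝ (Fin d)) :
    f (ω + v) ≤ f ω + ⟪gradient f ω, v⟫ + Λ / 2 * ‖v‖ ^ 2 := by
  set φ : ℝ → ℝ := fun t => f (ω + t • v) - t * ⟪gradient f ω, v⟫ - Λ / 2 * t ^ 2 * ‖v‖ ^ 2
    with hφ
  have hd : ∀ t : ℝ, HasDerivAt φ
      (⟪gradient f (ω + t • v), v⟫ - ⟪gradient f ω, v⟫ - Λ * t * ‖v‖ ^ 2) t := by
    intro t
    have hc : HasDerivAt (fun t : ℝ => ω + t • v) v t := by
      simpa using ((hasDerivAt_id t).smul_const v).const_add ω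
    have hF := (hf (ω + t • v)).hasGradientAt.hasFDerivAt
    have h1 : HasDerivAt (fun t : ℝ => f (ω + t • v)) (⟪gradient f (ω + t • v), v⟫) t := by
      have h := hF.comp_hasDerivAt t hc
      rw [InnerProductSpace.toDual_apply_apply] at h
      exact h
    have h2 : HasDerivAt (fun t : ℝ => t * ⟪gradient f ω, v⟫) (⟪gradient f ω, v⟫) t := by
      simpa using (hasDerivAt_id t).mul_const (⟪gradient f ω, v⟫)
    have h3 : HasDerivAt (fun t : ℝ => Λ / 2 * t ^ 2 * ‖v‖ ^ 2) (Λ * t * ‖v‖ ^ 2) t := by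
      have := (((hasDerivAt_pow 2 t).const_mul (Λ / 2)).mul_const (‖v‖ ^ 2))
      exact this.congr_deriv (by simp only [show (2:ℕ) - 1 = 1 from rfl, pow_one, Nat.cast_ofNat]; ring)
    exact (h1.sub h2).sub h3
  have hmono : AntitoneOn φ (Set.Icc (0:ℝ) 1) := by
    apply antitoneOn_of_deriv_nonpos (convex_Icc 0 1)
    · exact (Differentiable.continuous (fun t => (hd t).differentiableAt)).continuousOn
    · exact fun t _ => ((hd t).differentiableAt).differentiableWithinAt
    · intro t ht
      rw [interior_Icc] at ht
      rw [(hd t).deriv]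
      have h1 : ⟪gradient f (ω + t • v), v⟫ - ⟪gradient f ω, v⟫
          = ⟪gradient f (ω + t • v) - gradient f ω, v⟫ := by
        rw [inner_sub_left]
      have h2 : ⟪gradient f (ω + t • v) - gradient f ω, v⟫ ≤ Λ * t * ‖v‖ ^ 2 := by
        calc ⟪gradient f (ω + t • v) - gradient f ω, v⟫
            ≤ ‖gradient f (ω + t • v) - gradient f ω‖ * ‖v‖ := real_inner_le_norm _ _
          _ ≤ (Λ * ‖(ω + t • v) - ω‖) * ‖v‖ := by
              have := hlip ω (ω + t • v)
              nlinarith [norm_nonneg v]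
          _ = Λ * t * ‖v‖ ^ 2 := by
              rw [add_sub_cancel_left, norm_smul]
              simp [abs_of_pos ht.1]
              ring
      linarith [h1 ▸ h2]
  have := hmono (Set.mem_Icc.mpr ⟨le_refl 0, zero_le_one⟩)
      (Set.mem_Icc.mpr ⟨zero_le_one, le_refl 1⟩) zero_le_one
  simp only [hφ, zero_smul, add_zero, one_smul, one_pow, zero_pow, zero_mul, mul_zero,
    one_mul, mul_one, sub_zero, ne_eq, OfNat.ofNat_ne_zero, not_false_eq_true] at this
  linarith

lemma H_cs {d : ℕ} (θ₁ θ₂ : ℝ) (hθ1 : 0 < θ₁)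
    (H : EuclideanSpace ℝ (Fin d) →L[ℝ] EuclideanSpace ℝ (Fin d))
    (hHsa : IsSelfAdjoint H)
    (hH : ∀ v, θ₁ * ‖v‖ ^ 2 ≤ ⟪v, H v⟫ ∧ ⟪v, H v⟫ ≤ θ₂ * ‖v‖ ^ 2)
    (v : EuclideanSpace ℝ (Fin d)) : ‖H v‖ ≤ θ₂ * ‖v‖ := by
  by_cases hv : v = 0
  · simp [hv]
  have hv' : 0 < ‖v‖ := norm_pos_iff.mpr hv
  have hsym := hHsa.isSymmetric
  set u := H v with hu
  have hC : 0 < ⟪v, H v⟫ := lt_of_lt_of_le (mul_pos hθ1 (pow_pos hv' 2)) (hH v).1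
  have hθ2 : 0 < θ₂ := by nlinarith [(hH v).2]
  have key : ∀ t : ℝ, 0 ≤ ⟪u, H u⟫ + 2 * t * ⟪u, H v⟫ + t ^ 2 * ⟪v, H v⟫ := by
    intro t
    have h0 : (0:ℝ) ≤ ⟪u + t • v, H (u + t • v)⟫ :=
      le_trans (by positivity) (hH _).1
    have hexp : ⟪u + t • v, H (u + t • v)⟫
        = ⟪u, H u⟫ + 2 * t * ⟪u, H v⟫ + t ^ 2 * ⟪v, H v⟫ := by
      rw [map_add, inner_add_left, inner_add_right, inner_add_right, map_smul,
        inner_smul_left, inner_smul_right, inner_smul_left, inner_smul_right]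
      have h1 : ⟪v, H u⟫ = ⟪u, H v⟫ := by
        rw [real_inner_comm]; exact hsym u v
      simp only [RCLike.conj_to_real, h1]
      ring
    linarith [hexp ▸ h0]
  have hA0 : 0 ≤ ⟪u, H u⟫ := le_trans (by positivity) (hH u).1
  have hB2 : ⟪u, H v⟫ ^ 2 ≤ ⟪u, H u⟫ * ⟪v, H v⟫ := by
    obtain ⟨A, hA⟩ : ∃ A, ⟪u, H u⟫ = A := ⟨_, rfl⟩
    obtain ⟨B, hB⟩ : ∃ B, ⟪u, H v⟫ = B := ⟨_, rfl⟩
    obtain ⟨C, hCe⟩ : ∃ C, ⟪v, H v⟫ = C := ⟨_, rfl⟩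
    have hk := key (-(B / C))
    rw [hCe] at hC
    rw [hA] at hA0
    rw [hA, hB, hCe] at hk ⊢
    have hne : C ≠ 0 := hC.ne'
    have heq : A + 2 * (-(B / C)) * B + (-(B / C)) ^ 2 * C = A - B ^ 2 / C := by
      field_simp
      ring
    have h2 : B ^ 2 / C ≤ A := by linarith [heq ▸ hk]
    calc B ^ 2 = B ^ 2 / C * C := by field_simp
      _ ≤ A * C := by nlinarith
  have huHv : ⟪u, H v⟫ = ‖H v‖ ^ 2 := real_inner_self_eq_norm_sq _
  have hA := (hH u).2
  have hCb := (hH v).2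
  have hnu : ‖u‖ = ‖H v‖ := rfl
  have h4 : ‖H v‖ ^ 4 ≤ θ₂ ^ 2 * ‖H v‖ ^ 2 * ‖v‖ ^ 2 := by
    nlinarith [hB2, hA0, hC.le, norm_nonneg (H v), norm_nonneg v]
  rcases eq_or_lt_of_le (norm_nonneg (H v)) with h0 | h0
  · rw [show ‖H v‖ = ‖u‖ from rfl] at h0
    rw [← h0]
    positivity
  · have h2le : ‖H v‖ ^ 2 ≤ (θ₂ * ‖v‖) ^ 2 := by nlinarith [h4, mul_pos h0 h0]
    show ‖H v‖ ≤ θ₂ * ‖v‖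
    nlinarith [h2le, h0, mul_pos hθ2 hv']

set_option maxHeartbeats 1000000 in
/-- One-step nonconvex descent: for `f` Λ-smooth, `θ₁ I ⪯ H ⪯ θ₂ I`, `E[g] = ∇f(ω)`,
`E‖g‖² ≤ γ² + η‖∇f(ω)‖²` and `α ∈ (0, θ₁/(θ₂²ηΛ)]`:
`E[f(ω - αHg)] ≤ f(ω) - (αθ₁/2)‖∇f(ω)‖² + α²θ₂²Λγ²/2`. -/
theorem stmt8 {d : ℕ} {Ω : Type*} [Fintype Ω]
    (p : Ω → ℝ) (hp : ∀ x, 0 ≤ p x) (hp1 : ∑ x, p x = 1)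
    (f : EuclideanSpace ℝ (Fin d) → ℝ) (Λ θ₁ θ₂ γ η α : ℝ)
    (hf : Differentiable ℝ f)
    (hlip : ∀ ω ω' : EuclideanSpace ℝ (Fin d),
      ‖gradient f ω' - gradient f ω‖ ≤ Λ * ‖ω' - ω‖)
    (hΛ : 0 < Λ) (hθ1 : 0 < θ₁) (hθ12 : θ₁ ≤ θ₂) (hγ : 0 ≤ γ) (hη : 0 < η)
    (hα0 : 0 < α) (hα1 : α ≤ θ₁ / (θ₂ ^ 2 * η * Λ))
    (H : EuclideanSpace ℝ (Fin d) →L[ℝ] EuclideanSpace ℝ (Fin d))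
    (hHsa : IsSelfAdjoint H)
    (hH : ∀ v, θ₁ * ‖v‖ ^ 2 ≤ ⟪v, H v⟫ ∧ ⟪v, H v⟫ ≤ θ₂ * ‖v‖ ^ 2)
    (ω : EuclideanSpace ℝ (Fin d)) (g : Ω → EuclideanSpace ℝ (Fin d))
    (hunb : ∑ x, p x • g x = gradient f ω)
    (hmom : ∑ x, p x * ‖g x‖ ^ 2 ≤ γ ^ 2 + η * ‖gradient f ω‖ ^ 2) :
    ∑ x, p x * f (ω - α • H (g x)) ≤
      f ω - α * θ₁ / 2 * ‖gradient f ω‖ ^ 2 + α ^ 2 * θ₂ ^ 2 * Λ * γ ^ 2 / 2 := by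

  have hθ2 : 0 < θ₂ := lt_of_lt_of_le hθ1 hθ12
  have hdpos : (0:ℝ) < θ₂ ^ 2 * η * Λ := by positivity
  have hαb : α * (θ₂ ^ 2 * η * Λ) ≤ θ₁ := by
    rw [le_div_iff₀ hdpos] at hα1; linarith
  have hnorm := H_cs θ₁ θ₂ hθ1 H hHsa hH
  have hpt : ∀ x, f (ω - α • H (g x)) ≤
      f ω - α * ⟪gradient f ω, H (g x)⟫ + Λ / 2 * (α ^ 2 * θ₂ ^ 2 * ‖g x‖ ^ 2) := by
    intro x
    have h1 := descent_lemma f Λ hΛ.le hf hlip ω (-(α • H (g x)))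
    rw [show ω + -(α • H (g x)) = ω - α • H (g x) from (sub_eq_add_neg _ _).symm] at h1
    have h3 : ⟪gradient f ω, -(α • H (g x))⟫ = -(α * ⟪gradient f ω, H (g x)⟫) := by
      rw [inner_neg_right, real_inner_smul_right]
    have h4 : ‖-(α • H (g x))‖ ^ 2 ≤ α ^ 2 * θ₂ ^ 2 * ‖g x‖ ^ 2 := by
      rw [norm_neg, norm_smul, Real.norm_eq_abs]
      have h5 := hnorm (g x)
      have h7 : ‖H (g x)‖ ^ 2 ≤ θ₂ ^ 2 * ‖g x‖ ^ 2 := by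
        nlinarith [h5, norm_nonneg (H (g x)), mul_nonneg hθ2.le (norm_nonneg (g x))]
      have h8 : (|α| * ‖H (g x)‖) ^ 2 = α ^ 2 * ‖H (g x)‖ ^ 2 := by
        rw [mul_pow, sq_abs]
      rw [h8]
      nlinarith [h7, sq_nonneg α]
    nlinarith [h1, h3 ▸ h1, hΛ.le, h4]
  have hE1 : ∑ x, p x * ⟪gradient f ω, H (g x)⟫ = ⟪gradient f ω, H (gradient f ω)⟫ := by
    rw [← hunb, map_sum, inner_sum]
    refine Finset.sum_congr rfl fun x _ => ?_
    rw [map_smul, real_inner_smul_right]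
  have hsum : ∑ x, p x * f (ω - α • H (g x)) ≤
      ∑ x, p x * (f ω - α * ⟪gradient f ω, H (g x)⟫
        + Λ / 2 * (α ^ 2 * θ₂ ^ 2 * ‖g x‖ ^ 2)) :=
    Finset.sum_le_sum fun x _ => mul_le_mul_of_nonneg_left (hpt x) (hp x)
  have hsplit : ∑ x, p x * (f ω - α * ⟪gradient f ω, H (g x)⟫
        + Λ / 2 * (α ^ 2 * θ₂ ^ 2 * ‖g x‖ ^ 2))
      = f ω - α * ⟪gradient f ω, H (gradient f ω)⟫
        + Λ / 2 * α ^ 2 * θ₂ ^ 2 * ∑ x, p x * ‖g x‖ ^ 2 := by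
    rw [← hE1]
    rw [Finset.sum_congr rfl (fun x _ => by ring :
      ∀ x ∈ Finset.univ, p x * (f ω - α * ⟪gradient f ω, H (g x)⟫
        + Λ / 2 * (α ^ 2 * θ₂ ^ 2 * ‖g x‖ ^ 2))
      = p x * f ω - α * (p x * ⟪gradient f ω, H (g x)⟫)
        + Λ / 2 * α ^ 2 * θ₂ ^ 2 * (p x * ‖g x‖ ^ 2))]
    rw [Finset.sum_add_distrib, Finset.sum_sub_distrib, ← Finset.sum_mul, hp1,
      ← Finset.mul_sum, ← Finset.mul_sum]
    ring
  have hlow := (hH (gradient f ω)).1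
  have hG : (0:ℝ) ≤ ‖gradient f ω‖ ^ 2 := sq_nonneg _
  calc ∑ x, p x * f (ω - α • H (g x))
      ≤ f ω - α * ⟪gradient f ω, H (gradient f ω)⟫
        + Λ / 2 * α ^ 2 * θ₂ ^ 2 * ∑ x, p x * ‖g x‖ ^ 2 := le_of_le_of_eq hsum hsplit
    _ ≤ f ω - α * θ₁ / 2 * ‖gradient f ω‖ ^ 2 + α ^ 2 * θ₂ ^ 2 * Λ * γ ^ 2 / 2 := by
        have h1 : α * (θ₁ * ‖gradient f ω‖ ^ 2)
            ≤ α * ⟪gradient f ω, H (gradient f ω)⟫ :=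
          mul_le_mul_of_nonneg_left hlow hα0.le
        have h2 : Λ / 2 * α ^ 2 * θ₂ ^ 2 * ∑ x, p x * ‖g x‖ ^ 2
            ≤ Λ / 2 * α ^ 2 * θ₂ ^ 2 * (γ ^ 2 + η * ‖gradient f ω‖ ^ 2) :=
          mul_le_mul_of_nonneg_left hmom (by positivity)
        have h3 : (α * (θ₂ ^ 2 * η * Λ)) * (α * ‖gradient f ω‖ ^ 2 / 2)
            ≤ θ₁ * (α * ‖gradient f ω‖ ^ 2 / 2) :=
          mul_le_mul_of_nonneg_right hαb (by positivity)
        nlinarith [h1, h2, h3]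
end
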